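/- Let X₁, X₂ : ℝ³ → ℝ³ be C¹ maps and f : ℝ³ → ℝ be C². Define X_f : ℝ³ → ℝ³ by X_f(x) = (X₁f)(x)·X₂(x) − (X₂f)(x)·X₁(x). If p ∈ ℝ³ satisfies (X₁f)(p) = (X₂f)(p) = 0, then X_f(p) = 0, the Fréchet derivative of X_f at p is the linear map v ↦ (D(X₁f)(p)v)·X₂(p) − (D(X₂f)(p)v)·X₁(p), and its trace (the divergence of X_f at p) equals X₂(X₁f)(p) − X₁(X₂f)(p), i.e. the value ([X₂,X₁]f)(p). -/

import Mathlib

lemma trace_smulRight_aux (L : (Fin 3 → ℝ) →ₗ[ℝ] ℝ) (a : Fin 3 → ℝ) :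
    LinearMap.trace ℝ (Fin 3 → ℝ) (L.smulRight a) = L a := by
  have h : L.smulRight a = dualTensorHom ℝ (Fin 3 → ℝ) (Fin 3 → ℝ) (L ⊗ₜ a) := by
    ext v
    simp
  rw [h, LinearMap.trace_eq_contract_apply, contractLeft_apply]

/-- For C¹ vector fields `X₁, X₂` on `ℝ³` and a C² function `f`, the characteristic
vector field `X_f = (X₁f)X₂ − (X₂f)X₁` vanishes at a point `p` where `X₁f(p) = X₂f(p) = 0`;
its Fréchet derivative there is `v ↦ (D(X₁f)(p)v)·X₂(p) − (D(X₂f)(p)v)·X₁(p)`, and the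
trace of this derivative (the divergence of `X_f` at `p`) equals
`X₂(X₁f)(p) − X₁(X₂f)(p) = ([X₂,X₁]f)(p)`. -/
theorem characteristic_vector_field_derivative_and_divergence
    (X₁ X₂ : (Fin 3 → ℝ) → (Fin 3 → ℝ)) (f : (Fin 3 → ℝ) → ℝ)
    (hX₁ : ContDiff ℝ 1 X₁) (hX₂ : ContDiff ℝ 1 X₂) (hf : ContDiff ℝ 2 f)
    (X₁f X₂f : (Fin 3 → ℝ) → ℝ)
    (hX₁f : X₁f = fun x => fderiv ℝ f x (X₁ x))
    (hX₂f : X₂f = fun x => fderiv ℝ f x (X₂ x))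
    (Xf : (Fin 3 → ℝ) → (Fin 3 → ℝ))
    (hXf : Xf = fun x => X₁f x • X₂ x - X₂f x • X₁ x)
    (p : Fin 3 → ℝ) (hp1 : X₁f p = 0) (hp2 : X₂f p = 0) :
    Xf p = 0 ∧
    (∀ v : Fin 3 → ℝ,
      fderiv ℝ Xf p v = (fderiv ℝ X₁f p v) • X₂ p - (fderiv ℝ X₂f p v) • X₁ p) ∧
    LinearMap.trace ℝ (Fin 3 → ℝ)
        ((fderiv ℝ Xf p : (Fin 3 → ℝ) →L[ℝ] (Fin 3 → ℝ)) :
          (Fin 3 → ℝ) →ₗ[ℝ] (Fin 3 → ℝ)) =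
      fderiv ℝ X₁f p (X₂ p) - fderiv ℝ X₂f p (X₁ p) := by
  -- fderiv of f is C¹
  have hDf : ContDiff ℝ 1 (fderiv ℝ f) := hf.fderiv_right (by norm_num)
  have h1 : ContDiff ℝ 1 X₁f := by
    rw [hX₁f]; exact hDf.clm_apply hX₁
  have h2 : ContDiff ℝ 1 X₂f := by
    rw [hX₂f]; exact hDf.clm_apply hX₂
  have d1 : HasFDerivAt X₁f (fderiv ℝ X₁f p) p :=
    (h1.differentiable one_ne_zero p).hasFDerivAt
  have d2 : HasFDerivAt X₂f (fderiv ℝ X₂f p) p :=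
    (h2.differentiable one_ne_zero p).hasFDerivAt
  have dX1 : HasFDerivAt X₁ (fderiv ℝ X₁ p) p :=
    (hX₁.differentiable one_ne_zero p).hasFDerivAt
  have dX2 : HasFDerivAt X₂ (fderiv ℝ X₂ p) p :=
    (hX₂.differentiable one_ne_zero p).hasFDerivAt
  have hs1 : HasFDerivAt (fun x => X₁f x • X₂ x)
      ((fderiv ℝ X₁f p).smulRight (X₂ p)) p := by
    have := d1.smul dX2
    rwa [hp1, zero_smul, zero_add] at this
  have hs2 : HasFDerivAt (fun x => X₂f x • X₁ x)
      ((fderiv ℝ X₂f p).smulRight (X₁ p)) p := by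
    have := d2.smul dX1
    rwa [hp2, zero_smul, zero_add] at this
  have hD : HasFDerivAt Xf
      ((fderiv ℝ X₁f p).smulRight (X₂ p) - (fderiv ℝ X₂f p).smulRight (X₁ p)) p := by
    rw [hXf]; exact hs1.sub hs2
  have hfd : fderiv ℝ Xf p =
      (fderiv ℝ X₁f p).smulRight (X₂ p) - (fderiv ℝ X₂f p).smulRight (X₁ p) :=
    hD.fderiv
  refine ⟨by rw [hXf]; simp [hp1, hp2], ?_, ?_⟩
  · intro v
    rw [hfd]
    simp
  · rw [hfd]
    have : (((fderiv ℝ X₁f p).smulRight (X₂ p) -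
        (fderiv ℝ X₂f p).smulRight (X₁ p) : (Fin 3 → ℝ) →L[ℝ] (Fin 3 → ℝ)) :
          (Fin 3 → ℝ) →ₗ[ℝ] (Fin 3 → ℝ)) =
        ((fderiv ℝ X₁f p : (Fin 3 → ℝ) →ₗ[ℝ] ℝ).smulRight (X₂ p) -
         (fderiv ℝ X₂f p : (Fin 3 → ℝ) →ₗ[ℝ] ℝ).smulRight (X₁ p)) := by
      ext v
      simp
    rw [this, map_sub, trace_smulRight_aux, trace_smulRight_aux]
    rfl
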